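/- arXiv:2501.14658 — 3 statements merged into one kernel-verified Lean document; each statement's English description precedes it below -/
import Mathlib

section
/- Let G, H be graphs, let Z ⊆ V(G) with |Z| ≥ 2, and let η be a faithful extended strip decomposition of (G,Z) with pattern H. Then for every atom A of η, the boundary δ(A) has a core of size at most 3, i.e., there exists X ⊆ V(G) with |X| ≤ 3 and δ(A) ⊆ N[X]. -/
open scoped BigOperators
open SimpleGraph

attribute [local instance] Classical.propDecidable

namespace ArxivFormal

/-- The closed neighborhood `N[X]` of a set of vertices `X`. -/
def closedNbhd {V : Type} (G : SimpleGraph V) (X : Set V) : Set V :=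
  X ∪ {v | ∃ x ∈ X, G.Adj x v}

/-- The open neighborhood of the set `X` inside the ambient vertex set `A`
(i.e. computed in the induced subgraph `G[A]`). -/
def openNbhdIn {V : Type} (G : SimpleGraph V) (A X : Set V) : Set V :=
  {v | v ∈ A ∧ v ∉ X ∧ ∃ x ∈ X, G.Adj x v}

/-- Two (disjoint) vertex sets are anticomplete if there are no edges between them. -/
def Anticomplete {V : Type} (G : SimpleGraph V) (X Y : Set V) : Prop :=
  Disjoint X Y ∧ ∀ x ∈ X, ∀ y ∈ Y, ¬ G.Adj x y

/-- `alphaOn G S` is the stability (independence) number of `G[S]`. -/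
noncomputable def alphaOn {V : Type} [Fintype V] (G : SimpleGraph V) (S : Set V) : ℕ :=
  sSup {n | ∃ I : Finset V, ↑I ⊆ S ∧ (∀ u ∈ I, ∀ v ∈ I, ¬ G.Adj u v) ∧ I.card = n}

/-- The weight `w(S)` of a set of vertices. -/
noncomputable def setWeight {V : Type} [Fintype V] (w : V → ℝ) (S : Set V) : ℝ :=
  ∑ v ∈ Finset.univ.filter (fun v => v ∈ S), w v

/-- A weight function takes values in `[0,1]` and has total weight at most `1`. -/
def IsWeightFunction {V : Type} [Fintype V] (w : V → ℝ) : Prop :=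
  (∀ v, 0 ≤ w v ∧ w v ≤ 1) ∧ ∑ v, w v ≤ 1

/-- A normal weight function has total weight exactly `1`. -/
def IsNormalWeightFunction {V : Type} [Fintype V] (w : V → ℝ) : Prop :=
  (∀ v, 0 ≤ w v ∧ w v ≤ 1) ∧ ∑ v, w v = 1

/-- The vertex set (as a subset of the ambient vertex set) of the connected component `c`
of the induced subgraph `G[A]`. -/
def componentSet {V : Type} (G : SimpleGraph V) (A : Set V)
    (c : (G.induce A).ConnectedComponent) : Set V :=
  {v | ∃ h : v ∈ A, (G.induce A).connectedComponentMk ⟨v, h⟩ = c}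

/-- `X` is a `(w,c)`-balanced separator of the induced subgraph `G[B]`:
every component of `G[B] ∖ X` has weight at most `c`. -/
def IsSepWithin {V : Type} [Fintype V] (G : SimpleGraph V) (w : V → ℝ) (c : ℝ)
    (B X : Set V) : Prop :=
  ∀ comp : (G.induce (B \ X)).ConnectedComponent,
    setWeight w (componentSet G (B \ X) comp) ≤ c

/-- `X` is a `(w,c)`-balanced separator of `G`. -/
def IsBalancedSeparator {V : Type} [Fintype V] (G : SimpleGraph V) (w : V → ℝ)
    (c : ℝ) (X : Set V) : Prop :=
  IsSepWithin G w c Set.univ X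

/-- `G` contains no induced copy of `H`. -/
def IndFree {V W : Type} (G : SimpleGraph V) (H : SimpleGraph W) : Prop :=
  IsEmpty (H ↪g G)

/-- The graph `S_{t,t,t}`: the claw `K_{1,3}` with every edge subdivided `t-1` times,
i.e. three paths with `t` edges each, glued at a common center. -/
def subClaw (t : ℕ) : SimpleGraph (Unit ⊕ Fin 3 × Fin t) :=
  SimpleGraph.fromRel fun a b =>
    match a, b with
    | Sum.inl _, Sum.inr p => (p.2 : ℕ) = 0
    | Sum.inr p, Sum.inr q => p.1 = q.1 ∧ (p.2 : ℕ) + 1 = (q.2 : ℕ)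
    | _, _ => False

/-- The complete bipartite graph `K_{t,t}`. -/
def Ktt (t : ℕ) : SimpleGraph (Fin t ⊕ Fin t) := completeBipartiteGraph (Fin t) (Fin t)

/-- The `t`-by-`t` hexagonal grid (wall): a brick-wall graph with horizontal paths joined by
vertical edges whose positions alternate between consecutive rows. -/
def wall (t : ℕ) : SimpleGraph (Fin (t + 1) × Fin (2 * t + 2)) :=
  SimpleGraph.fromRel fun a b =>
    (a.1 = b.1 ∧ (a.2 : ℕ) + 1 = (b.2 : ℕ)) ∨
    ((a.1 : ℕ) + 1 = (b.1 : ℕ) ∧ a.2 = b.2 ∧ ((a.1 : ℕ) + (a.2 : ℕ)) % 2 = 0)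

/-- The graph obtained from `W` by subdividing the edge `uv` once (the new vertex is `none`). -/
def subdivideEdge {β : Type} (W : SimpleGraph β) (u v : β) : SimpleGraph (Option β) :=
  SimpleGraph.fromRel fun a b =>
    (∃ x y : β, a = some x ∧ b = some y ∧ W.Adj x y ∧ s(x, y) ≠ s(u, v)) ∨
    (a = none ∧ (b = some u ∨ b = some v))

/-- `IsSubdivisionOf G W` : `G` is (isomorphic to) a graph obtained from `W` by
repeatedly subdividing edges. -/
inductive IsSubdivisionOf : {α : Type} → {β : Type} → SimpleGraph α → SimpleGraph β → Prop
  | of_iso {α β : Type} {G : SimpleGraph α} {W : SimpleGraph β} :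
      (G ≃g W) → IsSubdivisionOf G W
  | step {α β : Type} {G : SimpleGraph α} {W : SimpleGraph β} {u v : β} :
      W.Adj u v → IsSubdivisionOf G (subdivideEdge W u v) → IsSubdivisionOf G W

/-- `G` contains no induced copy of the line graph of any subdivision of the `t×t` wall,
i.e. `G` is `𝓛_t`-free. -/
def LFree (t : ℕ) {V : Type} (G : SimpleGraph V) : Prop :=
  ∀ (β : Type) (H : SimpleGraph β), IsSubdivisionOf H (wall t) → IndFree G (lineGraph H)

/-- Membership in `𝓜_t`: `G` is `(𝓛_t ∪ {S_{t,t,t}, K_{t,t}})`-free. -/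
def InM (t : ℕ) {V : Type} (G : SimpleGraph V) : Prop :=
  LFree t G ∧ IndFree G (subClaw t) ∧ IndFree G (Ktt t)

/-- Membership in `𝓜_t*`: `G` is `(𝓛_t ∪ {S_{t,t,t}})`-free. -/
def InMstar (t : ℕ) {V : Type} (G : SimpleGraph V) : Prop :=
  LFree t G ∧ IndFree G (subClaw t)

/-- A tree decomposition of `G`. -/
structure TreeDecomp {V : Type} (G : SimpleGraph V) where
  ι : Type
  tree : SimpleGraph ι
  isTree : tree.IsTree
  bag : ι → Set V
  mem_bag : ∀ v : V, ∃ i, v ∈ bag i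
  edge_bag : ∀ ⦃u v : V⦄, G.Adj u v → ∃ i, u ∈ bag i ∧ v ∈ bag i
  bag_connected : ∀ v : V, (tree.induce {i | v ∈ bag i}).Connected

/-- An extended strip decomposition of `(G, Z)` with pattern `H`. -/
structure ESD {α β : Type} (G : SimpleGraph α) (Z : Set α) (H : SimpleGraph β) where
  vMap : β → Set α
  eMap : H.edgeSet → Set α
  tMap : {T : Finset β // H.IsNClique 3 T} → Set α
  evMap : H.edgeSet → β → Set α
  evMap_eq_empty : ∀ (e : H.edgeSet) (v : β), v ∉ (e : Sym2 β) → evMap e v = ∅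
  evMap_subset : ∀ (e : H.edgeSet) (v : β), evMap e v ⊆ eMap e
  covers : ∀ x : α, (∃ v, x ∈ vMap v) ∨ (∃ e, x ∈ eMap e) ∨ (∃ T, x ∈ tMap T)
  disj_vv : ∀ v v', v ≠ v' → Disjoint (vMap v) (vMap v')
  disj_ee : ∀ e e', e ≠ e' → Disjoint (eMap e) (eMap e')
  disj_tt : ∀ T T', T ≠ T' → Disjoint (tMap T) (tMap T')
  disj_ve : ∀ v e, Disjoint (vMap v) (eMap e)
  disj_vt : ∀ v T, Disjoint (vMap v) (tMap T)
  disj_et : ∀ e T, Disjoint (eMap e) (tMap T)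
  adj_iff : ∀ (e f : H.edgeSet), e ≠ f → ∀ x ∈ eMap e, ∀ y ∈ eMap f,
    (G.Adj x y ↔ ∃ v : β, v ∈ (e : Sym2 β) ∧ v ∈ (f : Sym2 β) ∧
      x ∈ evMap e v ∧ y ∈ evMap f v)
  vertex_bd : ∀ (v : β) (x y : α), x ∈ vMap v → y ∉ vMap v → G.Adj x y →
    ∃ e : H.edgeSet, v ∈ (e : Sym2 β) ∧ y ∈ evMap e v
  triangle_bd : ∀ (T : {T : Finset β // H.IsNClique 3 T}) (x y : α),
    x ∈ tMap T → y ∉ tMap T → G.Adj x y →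
    ∃ u v : β, u ≠ v ∧ u ∈ T.1 ∧ v ∈ T.1 ∧
      ∃ e : H.edgeSet, (e : Sym2 β) = s(u, v) ∧ y ∈ evMap e u ∧ y ∈ evMap e v
  leaves_equiv : Nonempty (Z ≃ {w : β // ∃! u, H.Adj w u})
  leaves_map : ∀ z ∈ Z, ∃ w : β, (∃! u, H.Adj w u) ∧
    ∀ e : H.edgeSet, w ∈ (e : Sym2 β) → evMap e w = {z}

namespace ESD

variable {α β : Type} {G : SimpleGraph α} {Z : Set α} {H : SimpleGraph β}

/-- `η` is faithful: for every edge `uv` of `H` there is an `e`-rung,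
an induced path inside `η(e)` from `η(e,v)` to `η(e,u)` whose internal vertices avoid
`η(e,u) ∪ η(e,v)`. -/
def IsFaithful (η : ESD G Z H) : Prop :=
  ∀ (u v : β) (h : H.Adj u v), ∃ (k : ℕ) (hk : 0 < k) (p : Fin k → α),
    Function.Injective p ∧
    (∀ i j : Fin k, (i : ℕ) < (j : ℕ) → (G.Adj (p i) (p j) ↔ (j : ℕ) = (i : ℕ) + 1)) ∧
    (∀ i, p i ∈ η.eMap ⟨s(u, v), H.mem_edgeSet.mpr h⟩) ∧
    p ⟨0, hk⟩ ∈ η.evMap ⟨s(u, v), H.mem_edgeSet.mpr h⟩ v ∧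
    p ⟨k - 1, Nat.sub_lt hk Nat.one_pos⟩ ∈ η.evMap ⟨s(u, v), H.mem_edgeSet.mpr h⟩ u ∧
    ∀ i : Fin k, (i : ℕ) ≠ 0 → (i : ℕ) ≠ k - 1 →
      p i ∉ η.evMap ⟨s(u, v), H.mem_edgeSet.mpr h⟩ u ∧
      p i ∉ η.evMap ⟨s(u, v), H.mem_edgeSet.mpr h⟩ v

/-- `η.IsAtomBd A Δ` : `A` is an atom of `η` with boundary `Δ`. -/
def IsAtomBd (η : ESD G Z H) (A Δ : Set α) : Prop :=
  (∃ v : β, A = η.vMap v ∧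
    Δ = {x | ∃ e : H.edgeSet, v ∈ (e : Sym2 β) ∧ x ∈ η.evMap e v}) ∨
  (∃ T, A = η.tMap T ∧
    Δ = {x | ∃ u v : β, u ≠ v ∧ u ∈ T.1 ∧ v ∈ T.1 ∧
      ∃ e : H.edgeSet, (e : Sym2 β) = s(u, v) ∧ x ∈ η.evMap e u ∧ x ∈ η.evMap e v}) ∨
  (∃ (u v : β) (h : H.Adj u v),
    A = η.eMap ⟨s(u, v), H.mem_edgeSet.mpr h⟩ \
        (η.evMap ⟨s(u, v), H.mem_edgeSet.mpr h⟩ u ∪ η.evMap ⟨s(u, v), H.mem_edgeSet.mpr h⟩ v) ∧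
    Δ = η.evMap ⟨s(u, v), H.mem_edgeSet.mpr h⟩ u ∪ η.evMap ⟨s(u, v), H.mem_edgeSet.mpr h⟩ v)

/-- `A` is an atom of `η`. -/
def IsAtom (η : ESD G Z H) (A : Set α) : Prop := ∃ Δ, η.IsAtomBd A Δ

end ESD
/-- A class of (finite) graphs. -/
def GraphClass : Type 1 := ∀ (V : Type) [Fintype V], SimpleGraph V → Prop

/-- The class `𝓒` is closed under taking induced subgraphs. -/
def GraphClass.ClosedUnderInduced (𝓒 : GraphClass) : Prop :=
  ∀ (V : Type) [Fintype V] (G : SimpleGraph V) (S : Set V) [Fintype S],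
    𝓒 V G → 𝓒 S (G.induce S)

/-- `G` is `k`-breakable: for every weight function there is a `w`-balanced separator
with a core of size strictly less than `k`. -/
def KBreakableGraph {V : Type} [Fintype V] (G : SimpleGraph V) (k : ℕ) : Prop :=
  ∀ w : V → ℝ, IsWeightFunction w → ∃ (Y : Set V) (X : Finset V),
    X.card < k ∧ Y ⊆ closedNbhd G ↑X ∧ IsBalancedSeparator G w (1 / 2) Y

/-- A `k`-breakable class of graphs. -/
def GraphClass.KBreakable (𝓒 : GraphClass) (k : ℕ) : Prop :=
  𝓒.ClosedUnderInduced ∧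
  ∀ (V : Type) [Fintype V] (G : SimpleGraph V), 𝓒 V G → KBreakableGraph G k

/-- `(S, C)` is a `(w, ε)`-boosted separator of `G`: for a maximum-weight component `B`
of `G ∖ C`, either `w(B) ≤ 1/2` or `S ∩ B` is a `(w, ε)`-balanced separator of `G[B]`. -/
def IsBoostedSeparator {V : Type} [Fintype V] (G : SimpleGraph V) (w : V → ℝ) (ε : ℝ)
    (S C : Set V) : Prop :=
  ∀ b : (G.induce Cᶜ).ConnectedComponent,
    (∀ b', setWeight w (componentSet G Cᶜ b') ≤ setWeight w (componentSet G Cᶜ b)) →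
    (setWeight w (componentSet G Cᶜ b) ≤ 1 / 2 ∨
      IsSepWithin G w ε (componentSet G Cᶜ b) (S ∩ componentSet G Cᶜ b))

/-- `G` is `(k, f, ε)`-breakable. -/
def KFEBreakableGraph {V : Type} [Fintype V] (G : SimpleGraph V) (k : ℕ) (f : ℕ → ℝ)
    (ε : ℝ) : Prop :=
  ∀ w : V → ℝ, IsWeightFunction w → ∃ (S C : Set V) (X : Finset V),
    X.card ≤ k ∧ S ⊆ closedNbhd G ↑X ∧ IsBoostedSeparator G w ε S C ∧
    (alphaOn G C : ℝ) ≤ f (Fintype.card V)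

/-- A `(k, f, ε)`-breakable class of graphs. -/
def GraphClass.KFEBreakable (𝓒 : GraphClass) (k : ℕ) (f : ℕ → ℝ) (ε : ℝ) : Prop :=
  𝓒.ClosedUnderInduced ∧
  ∀ (V : Type) [Fintype V] (G : SimpleGraph V), 𝓒 V G → KFEBreakableGraph G k f ε

section Problematic

variable {V : Type} [Fintype V]

/-- For a vertex `x` and a component `b` of `G[A] ∖ N[X]`, the quantity
`α(N(x) ∩ N(B))`, all computed in the graph `G[A]`. -/
noncomputable def probAlpha (G : SimpleGraph V) (A : Set V) (X : Finset V) (x : V)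
    (b : (G.induce (A \ closedNbhd G ↑X)).ConnectedComponent) : ℕ :=
  alphaOn G (G.neighborSet x ∩
    openNbhdIn G A (componentSet G (A \ closedNbhd G ↑X) b))

/-- `β(G[A], X)`: the largest `β` for which an `(X, β)`-problematic pair exists in `G[A]`
(and `0` if there is none). -/
noncomputable def maxBetaIn (G : SimpleGraph V) (w : V → ℝ) (ε : ℝ) (A : Set V)
    (X : Finset V) : ℕ :=
  Finset.sup Finset.univ
    (fun p : V × (G.induce (A \ closedNbhd G ↑X)).ConnectedComponent =>
      if p.1 ∈ X ∧ ε < setWeight w (componentSet G (A \ closedNbhd G ↑X) p.2)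
      then probAlpha G A X p.1 p.2 else 0)

/-- `W(G[A], X, β)`: the total weight of big components appearing in `(X, 3β/4)`-problematic
pairs of `G[A]`. -/
noncomputable def probWeightIn (G : SimpleGraph V) (w : V → ℝ) (ε : ℝ) (A : Set V)
    (X : Finset V) (β : ℝ) : ℝ :=
  ∑ x ∈ X, ∑ b : (G.induce (A \ closedNbhd G ↑X)).ConnectedComponent,
    if ε < setWeight w (componentSet G (A \ closedNbhd G ↑X) b) ∧
       3 * β / 4 ≤ (probAlpha G A X x b : ℝ)
    then setWeight w (componentSet G (A \ closedNbhd G ↑X) b) else 0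

end Problematic

/-- The `2`-subdivision of a graph: every edge is replaced by a three-edge path. The two
internal vertices of the path replacing an edge are the two darts of that edge. -/
def twoSubdivision {V : Type} (H : SimpleGraph V) : SimpleGraph (V ⊕ H.Dart) :=
  SimpleGraph.fromRel fun a b =>
    match a, b with
    | Sum.inl u, Sum.inr d => d.toProd.1 = u
    | Sum.inr d, Sum.inr d' => d' = d.symm
    | _, _ => False

/-- `K_γ^{(2)}`, the `2`-subdivision of the complete graph on `γ` vertices. -/
def Kgamma2 (γ : ℕ) : SimpleGraph (Fin γ ⊕ (⊤ : SimpleGraph (Fin γ)).Dart) :=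
  twoSubdivision (⊤ : SimpleGraph (Fin γ))

/-- `(A, B)` forms a `K_{s,t}` in `G` with respect to `Y`. -/
def IsKstWrt {V : Type} (G : SimpleGraph V) (s t : ℕ) (Y : Set V)
    (A B : Finset V) : Prop :=
  A.card = s ∧ B.card = t ∧ Disjoint A B ∧ ↑B ⊆ Y ∧
  (∀ u ∈ A, ∀ v ∈ A, ¬ G.Adj u v) ∧ (∀ u ∈ B, ∀ v ∈ B, ¬ G.Adj u v) ∧
  (∀ u ∈ A, ∀ v ∈ B, G.Adj u v)

/-- `G` is `K_{s,t}`-free with respect to `Y`. -/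
def KstFreeWrt {V : Type} (G : SimpleGraph V) (s t : ℕ) (Y : Set V) : Prop :=
  ¬ ∃ A B : Finset V, IsKstWrt G s t Y A B

/-- `p` enumerates the vertices of an induced path in `G`. -/
def IsPathSeq {V : Type} (G : SimpleGraph V) (k : ℕ) (p : Fin k → V) : Prop :=
  Function.Injective p ∧
  ∀ i j : Fin k, (i : ℕ) < (j : ℕ) → (G.Adj (p i) (p j) ↔ (j : ℕ) = (i : ℕ) + 1)

/-- `G` is a path. -/
def IsPathGraph {V : Type} (G : SimpleGraph V) : Prop :=
  ∃ n : ℕ, Nonempty (G ≃g SimpleGraph.pathGraph n)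

/-- `G` is a caterpillar: a tree with maximum degree at most three in which some path
contains all vertices of degree three. -/
def IsCaterpillar {V : Type} (G : SimpleGraph V) : Prop :=
  G.IsTree ∧ (∀ v, (G.neighborSet v).ncard ≤ 3) ∧
  ∃ (k : ℕ) (p : Fin k → V), IsPathSeq G k p ∧
    ∀ v : V, (G.neighborSet v).ncard = 3 → ∃ i, p i = v

/-- `G` is a subdivided star. -/
def IsSubdividedStar {V : Type} (G : SimpleGraph V) : Prop :=
  ∃ m : ℕ, IsSubdivisionOf G (completeBipartiteGraph Unit (Fin m))

/-- `G` is the line graph of a caterpillar. -/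
def IsLineGraphOfCaterpillar {V : Type} (G : SimpleGraph V) : Prop :=
  ∃ (β : Type) (T : SimpleGraph β), Finite β ∧ IsCaterpillar T ∧ Nonempty (G ≃g lineGraph T)

/-- `G` is the line graph of a subdivided star. -/
def IsLineGraphOfSubdividedStar {V : Type} (G : SimpleGraph V) : Prop :=
  ∃ (β : Type) (T : SimpleGraph β), Finite β ∧ IsSubdividedStar T ∧
    Nonempty (G ≃g lineGraph T)

/-- The set `𝒵(G)` of vertices whose neighborhood is a clique. -/
def cliqueVerts {V : Type} (G : SimpleGraph V) : Set V :=
  {v | (G.neighborSet v).Pairwise G.Adj}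

/-- Membership in `𝒮`: a forest every component of which has at most three leaves. -/
def InS {V : Type} (T : SimpleGraph V) : Prop :=
  T.IsAcyclic ∧ ∀ c : T.ConnectedComponent,
    {v | T.connectedComponentMk v = c ∧ (T.neighborSet v).ncard = 1}.ncard ≤ 3

/-- The vertex set of a connected component of `G`. -/
def ccSet {V : Type} (G : SimpleGraph V) (c : G.ConnectedComponent) : Set V :=
  {v | G.connectedComponentMk v = c}


section Stmt4Aux

variable {α β : Type} {G : SimpleGraph α} {Z : Set α} {H : SimpleGraph β}

lemma mem_cn_self {X : Set α} {x : α} (h : x ∈ X) : x ∈ closedNbhd G X :=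
  Set.mem_union_left _ h

lemma mem_cn_adj {X : Set α} {q x : α} (h : q ∈ X) (ha : G.Adj q x) :
    x ∈ closedNbhd G X :=
  Set.mem_union_right _ ⟨q, h, ha⟩

lemma esd_adj (η : ESD G Z H) {e f : H.edgeSet} (hef : (e : Sym2 β) ≠ (f : Sym2 β)) {s : β}
    (hse : s ∈ (e : Sym2 β)) (hsf : s ∈ (f : Sym2 β)) {x q : α}
    (hx : x ∈ η.evMap e s) (hq : q ∈ η.evMap f s) : G.Adj q x :=
  ((η.adj_iff e f (fun h => hef (congrArg _ h)) x (η.evMap_subset e s hx) q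
    (η.evMap_subset f s hq)).mpr ⟨s, hse, hsf, hx, hq⟩).symm

lemma rung_start (η : ESD G Z H) (hη : η.IsFaithful) {u v : β} (h : H.Adj u v) :
    ∃ q, q ∈ η.evMap ⟨s(u, v), H.mem_edgeSet.mpr h⟩ v := by
  obtain ⟨k, hk, p, -, -, -, h0, -⟩ := hη u v h
  exact ⟨p ⟨0, hk⟩, h0⟩

lemma leaf_singleton [Fintype α] [Fintype β] (η : ESD G Z H) {w : β}
    (hw : ∃! u, H.Adj w u) :
    ∃ z, ∀ e : H.edgeSet, w ∈ (e : Sym2 β) → η.evMap e w = {z} := by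
  obtain ⟨eqv⟩ := η.leaves_equiv
  have hF : ∀ z : Z, ∃ w' : {w : β // ∃! u, H.Adj w u},
      ∀ e : H.edgeSet, w'.1 ∈ (e : Sym2 β) → η.evMap e w'.1 = {z.1} := by
    intro z
    obtain ⟨w', hw1, hw2⟩ := η.leaves_map z.1 z.2
    exact ⟨⟨w', hw1⟩, hw2⟩
  choose F hF2 using hF
  have hinj : Function.Injective F := by
    intro z z' h
    obtain ⟨u, hu, -⟩ := (F z).2
    have he : s((F z).1, u) ∈ H.edgeSet := H.mem_edgeSet.mpr hu
    have h1 := hF2 z ⟨_, he⟩ (Sym2.mem_mk_left _ _)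
    have h2 := hF2 z' ⟨_, he⟩ (by rw [← h]; exact Sym2.mem_mk_left _ _)
    rw [← h] at h2
    rw [h1] at h2
    exact Subtype.ext (Set.singleton_eq_singleton_iff.mp h2)
  obtain ⟨z, hz⟩ := (Finite.injective_iff_surjective_of_equiv eqv).mp hinj ⟨w, hw⟩
  refine ⟨z.1, fun e hme => ?_⟩
  have h3 := hF2 z e
  rw [hz] at h3
  exact h3 hme

lemma end_dom [Fintype α] [Fintype β] (η : ESD G Z H) (hη : η.IsFaithful) {u v : β}
    (h : H.Adj u v) :
    ∃ q : α, ∀ x ∈ η.evMap ⟨s(u, v), H.mem_edgeSet.mpr h⟩ u, x = q ∨ G.Adj q x := by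
  by_cases h2 : ∃ t, t ≠ v ∧ H.Adj u t
  · obtain ⟨t, htv, hut⟩ := h2
    obtain ⟨q, hq⟩ := rung_start η hη hut.symm
    refine ⟨q, fun x hx => Or.inr (esd_adj η ?_ (Sym2.mem_mk_left _ _)
      (Sym2.mem_mk_right _ _) hx hq)⟩
    intro hcontra
    rw [Sym2.eq_iff] at hcontra
    rcases hcontra with ⟨-, h3⟩ | ⟨-, h3⟩
    · exact h.ne' h3
    · exact htv h3.symm
  · push_neg at h2
    have huni : ∃! t, H.Adj u t :=
      ⟨v, h, fun t ht => by_contra fun hne => h2 t hne ht⟩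
    obtain ⟨z, hz⟩ := leaf_singleton η huni
    refine ⟨z, fun x hx => Or.inl ?_⟩
    have h3 := hz ⟨s(u, v), H.mem_edgeSet.mpr h⟩ (Sym2.mem_mk_left _ _)
    rw [h3] at hx
    exact hx

end Stmt4Aux

/-- For a faithful extended strip decomposition `η` of `(G,Z)` with `|Z| ≥ 2`,
the boundary of every atom has a core of size at most `3`. -/
theorem stmt_4 :
    ∀ (α β : Type) [Fintype α] [Fintype β] (G : SimpleGraph α) (Z : Set α)
      (H : SimpleGraph β), 2 ≤ Z.ncard →
      ∀ η : ESD G Z H, η.IsFaithful →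
        ∀ A Δ : Set α, η.IsAtomBd A Δ →
          ∃ X : Finset α, X.card ≤ 3 ∧ Δ ⊆ closedNbhd G ↑X := by
  intro α β _ _ G Z H _ η hη A Δ hAtom
  rcases hAtom with ⟨v, -, hΔ⟩ | ⟨T, -, hΔ⟩ | ⟨u, v, h, -, hΔ⟩
  · -- vertex atom
    by_cases hne : ∃ x, x ∈ Δ
    · obtain ⟨x0, hx0⟩ := hne
      rw [hΔ] at hx0
      obtain ⟨e0, hve0, -⟩ := hx0
      have hadj0 : H.Adj v (Sym2.Mem.other hve0) :=
        H.mem_edgeSet.mp (by rw [Sym2.other_spec hve0]; exact e0.2)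
      set u0 := Sym2.Mem.other hve0
      by_cases h2 : ∃ t, t ≠ u0 ∧ H.Adj v t
      · obtain ⟨t, htu0, hvt⟩ := h2
        obtain ⟨q1, hq1⟩ := rung_start η hη hadj0.symm
        obtain ⟨q2, hq2⟩ := rung_start η hη hvt.symm
        refine ⟨{q1, q2}, ?_, ?_⟩
        · exact (Finset.card_insert_le _ _).trans (by simp)
        · intro x hx
          rw [hΔ] at hx
          obtain ⟨g, hvg, hxg⟩ := hx
          by_cases hg : (g : Sym2 β) = s(u0, v)
          · refine mem_cn_adj (q := q2) (by simp) (esd_adj η ?_ hvg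
              (Sym2.mem_mk_right _ _) hxg hq2)
            rw [hg]
            intro hcontra
            rw [Sym2.eq_iff] at hcontra
            rcases hcontra with ⟨h3, -⟩ | ⟨h3, -⟩
            · exact htu0 h3.symm
            · exact hadj0.ne h3.symm
          · exact mem_cn_adj (q := q1) (by simp) (esd_adj η hg hvg
              (Sym2.mem_mk_right _ _) hxg hq1)
      · push_neg at h2
        have huni : ∃! t, H.Adj v t :=
          ⟨u0, hadj0, fun t ht => by_contra fun hne => h2 t hne ht⟩
        obtain ⟨z, hz⟩ := leaf_singleton η huni
        refine ⟨{z}, by simp, fun x hx => ?_⟩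
        rw [hΔ] at hx
        obtain ⟨g, hvg, hxg⟩ := hx
        rw [hz g hvg] at hxg
        exact mem_cn_self (by simpa using hxg)
    · push_neg at hne
      exact ⟨∅, by simp, fun x hx => absurd hx (hne x)⟩
  · -- triangle atom
    obtain ⟨a, b, c, hab, hac, hbc, hT⟩ := Finset.card_eq_three.mp T.2.card_eq
    have hcl := T.2.isClique
    have hca : H.Adj c a := hcl (by simp [hT]) (by simp [hT]) hac.symm
    have hAB : H.Adj a b := hcl (by simp [hT]) (by simp [hT]) hab
    have hBC : H.Adj b c := hcl (by simp [hT]) (by simp [hT]) hbc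
    obtain ⟨qa, hqa⟩ := rung_start η hη hca
    obtain ⟨qb, hqb⟩ := rung_start η hη hAB
    obtain ⟨qc, hqc⟩ := rung_start η hη hBC
    refine ⟨{qa, qb, qc}, ?_, ?_⟩
    · exact (Finset.card_insert_le _ _).trans
        (by simpa using Nat.add_le_add_right ((Finset.card_insert_le qb {qc}).trans (by simp : ({qc} : Finset α).card + 1 ≤ 2)) 1)
    · intro x hx
      rw [hΔ] at hx
      obtain ⟨u, v, huv, huT, hvT, e, he, hxu, hxv⟩ := hx
      rw [hT] at huT hvT
      simp only [Finset.mem_insert, Finset.mem_singleton] at huT hvT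
      rcases huT with rfl | rfl | rfl <;> rcases hvT with rfl | rfl | rfl
      · exact absurd rfl huv
      · -- u=a, v=b : shared a, use qa over s(c,a)
        exact mem_cn_adj (q := qa) (by simp) (esd_adj η
          (by rw [he]; simp only [ne_eq, Sym2.eq_iff]; tauto)
          (by rw [he]; exact Sym2.mem_mk_left _ _) (Sym2.mem_mk_right _ _) hxu hqa)
      · -- u=a, v=c : shared c, use qc over s(b,c)
        exact mem_cn_adj (q := qc) (by simp) (esd_adj η
          (by rw [he]; simp only [ne_eq, Sym2.eq_iff]; tauto)
          (by rw [he]; exact Sym2.mem_mk_right _ _) (Sym2.mem_mk_right _ _) hxv hqc)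
      · -- u=b, v=a : shared a, qa
        exact mem_cn_adj (q := qa) (by simp) (esd_adj η
          (by rw [he]; simp only [ne_eq, Sym2.eq_iff]; tauto)
          (by rw [he]; exact Sym2.mem_mk_right _ _) (Sym2.mem_mk_right _ _) hxv hqa)
      · exact absurd rfl huv
      · -- u=b, v=c : shared b, use qb over s(a,b)
        exact mem_cn_adj (q := qb) (by simp) (esd_adj η
          (by rw [he]; simp only [ne_eq, Sym2.eq_iff]; tauto)
          (by rw [he]; exact Sym2.mem_mk_left _ _) (Sym2.mem_mk_right _ _) hxu hqb)
      · -- u=c, v=a : shared c, qc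
        exact mem_cn_adj (q := qc) (by simp) (esd_adj η
          (by rw [he]; simp only [ne_eq, Sym2.eq_iff]; tauto)
          (by rw [he]; exact Sym2.mem_mk_left _ _) (Sym2.mem_mk_right _ _) hxu hqc)
      · -- u=c, v=b : shared b, qb
        exact mem_cn_adj (q := qb) (by simp) (esd_adj η
          (by rw [he]; simp only [ne_eq, Sym2.eq_iff]; tauto)
          (by rw [he]; exact Sym2.mem_mk_right _ _) (Sym2.mem_mk_right _ _) hxv hqb)
      · exact absurd rfl huv
  · -- edge atom
    obtain ⟨qu, hqu⟩ := end_dom η hη h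
    obtain ⟨qv, hqv⟩ := end_dom η hη h.symm
    have hee : (⟨s(v, u), H.mem_edgeSet.mpr h.symm⟩ : H.edgeSet)
        = ⟨s(u, v), H.mem_edgeSet.mpr h⟩ := Subtype.ext (Sym2.eq_swap)
    rw [hee] at hqv
    refine ⟨{qu, qv}, (Finset.card_insert_le _ _).trans (by simp), fun x hx => ?_⟩
    rw [hΔ] at hx
    rcases hx with hx | hx
    · rcases hqu x hx with rfl | hadj
      · exact mem_cn_self (by simp)
      · exact mem_cn_adj (q := qu) (by simp) hadj
    · rcases hqv x hx with rfl | hadj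
      · exact mem_cn_self (by simp)
      · exact mem_cn_adj (q := qv) (by simp) hadj


end ArxivFormal
end

section
/- Let k ≥ 2 be an integer and let 𝒞 be a k-breakable class of graphs. Let G ∈ 𝒞 and let w be a weight function on G. Then for every positive integer i there exists X ⊆ V(G) with |X| < 2^{i+1}(k−1) such that N[X] is a (w, 1/2^i)-balanced separator of G. -/
open scoped BigOperators
open SimpleGraph

attribute [local instance] Classical.propDecidable

namespace ArxivFormal

section Helpers
set_option linter.unusedSectionVars false

variable {V : Type} [Fintype V] {G : SimpleGraph V}

lemma setWeight_mono {w : V → ℝ} (hw : ∀ v, 0 ≤ w v) {S T : Set V} (h : S ⊆ T) :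
    setWeight w S ≤ setWeight w T := by
  apply Finset.sum_le_sum_of_subset_of_nonneg
  · intro v hv
    simp only [Finset.mem_filter, Finset.mem_univ, true_and] at *
    exact h hv
  · intro v _ _; exact hw v

lemma weight_le_setWeight {w : V → ℝ} (hw : ∀ v, 0 ≤ w v) {S : Set V} {v : V} (hv : v ∈ S) :
    w v ≤ setWeight w S :=
  Finset.single_le_sum (f := w) (fun i _ => hw i) (by simp [hv])

lemma mem_componentSet {A : Set V} {x : V} (hx : x ∈ A) :
    x ∈ componentSet G A ((G.induce A).connectedComponentMk ⟨x, hx⟩) := ⟨hx, rfl⟩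

def inclHom {A B : Set V} (h : A ⊆ B) : G.induce A →g G.induce B where
  toFun := Set.inclusion h
  map_rel' := fun hab => hab

lemma componentSet_subset {A B : Set V} (hAB : A ⊆ B) {x : V} (hx : x ∈ A) :
    componentSet G A ((G.induce A).connectedComponentMk ⟨x, hx⟩) ⊆
      componentSet G B ((G.induce B).connectedComponentMk ⟨x, hAB hx⟩) := by
  rintro y ⟨hy, hc⟩
  refine ⟨hAB hy, ?_⟩
  rw [SimpleGraph.ConnectedComponent.eq] at hc ⊢
  exact hc.map (inclHom hAB)

lemma closedNbhd_mono {A B : Set V} (h : A ⊆ B) : closedNbhd G A ⊆ closedNbhd G B := by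
  rintro v (hv | ⟨x, hx, hxv⟩)
  · exact Or.inl (h hv)
  · exact Or.inr ⟨x, h hx, hxv⟩

lemma componentSet_disjoint {A : Set V} {c d : (G.induce A).ConnectedComponent} (h : c ≠ d) :
    Disjoint (componentSet G A c) (componentSet G A d) := by
  rw [Set.disjoint_left]
  rintro v ⟨hv, rfl⟩ ⟨hv', h2⟩
  exact h h2

lemma setWeight_eq_sum_subtype (w : V → ℝ) (D : Set V) :
    setWeight w D = ∑ v : ↥D, w ↑v := by
  rw [setWeight]
  exact Finset.sum_subtype _ (by simp) w

lemma setWeight_image_val (w : V → ℝ) {D : Set V} (B : Set ↥D) :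
    setWeight w (Subtype.val '' B) = ∑ v ∈ Finset.univ.filter (fun v : ↥D => v ∈ B), w ↑v := by
  have himg : Finset.univ.filter (fun v => v ∈ Subtype.val '' B)
      = (Finset.univ.filter (fun v : ↥D => v ∈ B)).image Subtype.val := by
    ext z; simp
  rw [setWeight, himg, Finset.sum_image (fun x _ y _ h => Subtype.val_injective h)]

lemma nested_reach {A D : Set V} {T' : Set ↥D} {S : Set V}
    (hSD : ∀ z ∈ S, z ∈ D)
    (hST : ∀ z (hz : z ∈ S), (⟨z, hSD z hz⟩ : ↥D) ∈ T') :
    ∀ {u v : ↥A} (p : (G.induce A).Walk u v), (∀ z ∈ p.support, (z : V) ∈ S) →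
      ∀ (hu : (u : V) ∈ S) (hv : (v : V) ∈ S),
      ((G.induce D).induce T').Reachable ⟨⟨u, hSD _ hu⟩, hST _ hu⟩ ⟨⟨v, hSD _ hv⟩, hST _ hv⟩ := by
  intro u v p
  induction p with
  | nil => intro _ hu hv; exact SimpleGraph.Reachable.refl _
  | @cons a b c h p ih =>
    intro hs hu hv
    have hb : (b : V) ∈ S := hs b (by simp)
    exact (SimpleGraph.Adj.reachable (by exact h)).trans
      (ih (fun z hz => hs z (by simp [hz])) hb hv)

lemma walk_support_mem_componentSet {A : Set V} {x : V} (hx : x ∈ A)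
    {u : ↥A} (p : (G.induce A).Walk u ⟨x, hx⟩) :
    ∀ z ∈ p.support,
      (z : V) ∈ componentSet G A ((G.induce A).connectedComponentMk ⟨x, hx⟩) := by
  intro z hz
  exact ⟨z.2, SimpleGraph.ConnectedComponent.eq.mpr ⟨p.dropUntil z hz⟩⟩


lemma isBalancedSeparator_mono {w : V → ℝ} (hw : ∀ v, 0 ≤ w v) {c : ℝ} {Y Y' : Set V}
    (hYY : Y ⊆ Y') (hY : IsBalancedSeparator G w c Y) :
    IsBalancedSeparator G w c Y' := by
  intro comp
  induction comp using SimpleGraph.ConnectedComponent.ind with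
  | _ xv =>
    obtain ⟨x, hx⟩ := xv
    have hAB : Set.univ \ Y' ⊆ Set.univ \ Y := Set.diff_subset_diff_right hYY
    calc setWeight w (componentSet G (Set.univ \ Y') _)
        ≤ setWeight w (componentSet G (Set.univ \ Y)
            ((G.induce (Set.univ \ Y)).connectedComponentMk ⟨x, hAB hx⟩)) :=
          setWeight_mono hw (componentSet_subset hAB hx)
      _ ≤ c := hY _
end Helpers

/-- in a `k`-breakable class, every member has, for every positive `i`,
a `(w, 1/2^i)`-balanced separator `N[X]` with `|X| < 2^{i+1}(k-1)`. -/
theorem stmt_10 :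
    ∀ k : ℕ, 2 ≤ k →
    ∀ 𝓒 : GraphClass, 𝓒.KBreakable k →
    ∀ (V : Type) [Fintype V] (G : SimpleGraph V), 𝓒 V G →
    ∀ w : V → ℝ, IsWeightFunction w →
    ∀ i : ℕ, 0 < i →
      ∃ X : Finset V, X.card < 2 ^ (i + 1) * (k - 1) ∧
        IsBalancedSeparator G w ((1 : ℝ) / 2 ^ i) (closedNbhd G ↑X) := by
  intro k hk 𝓒 h𝓒 V _ G hG w hw i hi
  obtain ⟨hclosed, hbreak⟩ := h𝓒
  have hwnn : ∀ v, 0 ≤ w v := fun v => (hw.1 v).1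
  have hi' : 1 ≤ i := hi
  clear hi
  induction i, hi' using Nat.le_induction with
  | base =>
    obtain ⟨Y, X, hXk, hYX, hsep⟩ := hbreak V G hG w hw
    refine ⟨X, by omega, ?_⟩
    have h2 : ((1 : ℝ) / 2 ^ 1) = 1 / 2 := by norm_num
    rw [h2]
    exact isBalancedSeparator_mono hwnn hYX hsep
  | succ i hi1 ih =>
    obtain ⟨X₀, hc₀, hs₀⟩ := ih
    -- abbreviations
    have hsubA : Set.univ \ closedNbhd G (↑X₀ : Set V) ⊆ Set.univ \ closedNbhd G (↑X₀ : Set V) := le_refl _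
    -- choose separators for heavy components
    have hchoice : ∀ d : (G.induce (Set.univ \ closedNbhd G (↑X₀ : Set V))).ConnectedComponent,
        ∃ (Xd : Finset ↥(componentSet G (Set.univ \ closedNbhd G (↑X₀ : Set V)) d))
          (Yd : Set ↥(componentSet G (Set.univ \ closedNbhd G (↑X₀ : Set V)) d)),
        ((1:ℝ)/2^(i+1) < setWeight w (componentSet G (Set.univ \ closedNbhd G (↑X₀ : Set V)) d) →
          Xd.card < k ∧
          Yd ⊆ closedNbhd (G.induce (componentSet G (Set.univ \ closedNbhd G (↑X₀ : Set V)) d)) ↑Xd ∧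
          IsBalancedSeparator (G.induce (componentSet G (Set.univ \ closedNbhd G (↑X₀ : Set V)) d))
            (fun v => w ↑v / setWeight w (componentSet G (Set.univ \ closedNbhd G (↑X₀ : Set V)) d))
            (1/2) Yd) := by
      intro d
      by_cases hd : (1:ℝ)/2^(i+1) < setWeight w (componentSet G (Set.univ \ closedNbhd G (↑X₀ : Set V)) d)
      · set D := componentSet G (Set.univ \ closedNbhd G (↑X₀ : Set V)) d with hD
        have hWpos : 0 < setWeight w D := lt_trans (by positivity) hd
        have hwf : IsWeightFunction (fun v : ↥D => w ↑v / setWeight w D) := by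
          constructor
          · intro v
            constructor
            · exact div_nonneg (hwnn ↑v) (le_of_lt hWpos)
            · exact (div_le_one hWpos).mpr (weight_le_setWeight hwnn v.2)
          · rw [← Finset.sum_div, ← setWeight_eq_sum_subtype, div_self (ne_of_gt hWpos)]
        obtain ⟨Yd, Xd, h1, h2, h3⟩ := hbreak ↥D (G.induce D) (hclosed V G D hG) _ hwf
        exact ⟨Xd, Yd, fun _ => ⟨h1, h2, h3⟩⟩
      · exact ⟨∅, ∅, fun h => absurd h hd⟩
    choose Xc Yc hXY using hchoice
    set Hvy : Finset (G.induce (Set.univ \ closedNbhd G (↑X₀ : Set V))).ConnectedComponent :=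
      Finset.univ.filter (fun d => (1:ℝ)/2^(i+1) <
        setWeight w (componentSet G (Set.univ \ closedNbhd G (↑X₀ : Set V)) d)) with hHvy
    -- bound on number of heavy components
    have hHvyCard : Hvy.card ≤ 2^(i+1) := by
      have hdisj : (↑Hvy : Set _).PairwiseDisjoint
          (fun d => Finset.univ.filter (fun v =>
            v ∈ componentSet G (Set.univ \ closedNbhd G (↑X₀ : Set V)) d)) := by
        intro a _ b _ hab
        have := componentSet_disjoint (G := G)
          (A := Set.univ \ closedNbhd G (↑X₀ : Set V)) hab
        simp only [Function.onFun, Finset.disjoint_left, Finset.mem_filter, Finset.mem_univ,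
          true_and]
        intro v hv hv'
        exact Set.disjoint_left.mp this hv hv'
      have hsum1 : ∑ d ∈ Hvy, setWeight w (componentSet G (Set.univ \ closedNbhd G (↑X₀ : Set V)) d) ≤ 1 := by
        calc ∑ d ∈ Hvy, setWeight w (componentSet G (Set.univ \ closedNbhd G (↑X₀ : Set V)) d)
            = ∑ v ∈ Hvy.biUnion (fun d => Finset.univ.filter (fun v =>
                v ∈ componentSet G (Set.univ \ closedNbhd G (↑X₀ : Set V)) d)), w v :=
              (Finset.sum_biUnion hdisj).symm
          _ ≤ ∑ v, w v := Finset.sum_le_sum_of_subset_of_nonneg (Finset.subset_univ _)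
              (fun v _ _ => hwnn v)
          _ ≤ 1 := hw.2
      have h2 : (Hvy.card : ℝ) * ((1:ℝ)/2^(i+1)) ≤ 1 := by
        have := Finset.card_nsmul_le_sum Hvy
          (fun d => setWeight w (componentSet G (Set.univ \ closedNbhd G (↑X₀ : Set V)) d))
          ((1:ℝ)/2^(i+1))
          (fun d hd => le_of_lt (by exact (Finset.mem_filter.mp hd).2))
        rw [nsmul_eq_mul] at this
        linarith
      have hp : (0:ℝ) < 2^(i+1) := by positivity
      rw [mul_one_div, div_le_one hp] at h2
      exact_mod_cast h2
    -- the new set X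
    set newX : Finset V := X₀ ∪ Hvy.biUnion (fun d => (Xc d).image Subtype.val) with hnewX
    have hX₀sub : (↑X₀ : Set V) ⊆ (↑newX : Set V) := by
      intro v hv; simp only [hnewX, Finset.coe_union, Set.mem_union]; exact Or.inl hv
    refine ⟨newX, ?_, ?_⟩
    · -- cardinality
      have hb : (Hvy.biUnion (fun d => (Xc d).image Subtype.val)).card ≤ Hvy.card * (k-1) := by
        calc (Hvy.biUnion (fun d => (Xc d).image Subtype.val)).card
            ≤ ∑ d ∈ Hvy, ((Xc d).image Subtype.val).card := Finset.card_biUnion_le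
          _ ≤ Hvy.card * (k-1) := by
              rw [← smul_eq_mul]
              apply Finset.sum_le_card_nsmul
              intro d hd
              have h1 := (hXY d ((Finset.mem_filter.mp hd).2)).1
              calc ((Xc d).image Subtype.val).card ≤ (Xc d).card := Finset.card_image_le
                _ ≤ k - 1 := by omega
      have hu := Finset.card_union_le X₀ (Hvy.biUnion (fun d => (Xc d).image Subtype.val))
      have hpow2 : (2:ℕ)^(i+1+1)*(k-1) = 2 * (2^(i+1)*(k-1)) := by ring
      have hHk := Nat.mul_le_mul_right (k-1) hHvyCard
      have hln : newX.card = (X₀ ∪ Hvy.biUnion (fun d => (Xc d).image Subtype.val)).card := rfl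
      omega
    · -- separator property
      intro comp
      induction comp using SimpleGraph.ConnectedComponent.ind with
      | _ xv =>
        obtain ⟨x, hx⟩ := xv
        have hNsub : closedNbhd G (↑X₀ : Set V) ⊆ closedNbhd G (↑newX : Set V) :=
          closedNbhd_mono hX₀sub
        have hsub : Set.univ \ closedNbhd G (↑newX : Set V) ⊆
            Set.univ \ closedNbhd G (↑X₀ : Set V) := Set.diff_subset_diff_right hNsub
        have hxA : x ∈ Set.univ \ closedNbhd G (↑X₀ : Set V) := hsub hx
        set d0 := (G.induce (Set.univ \ closedNbhd G (↑X₀ : Set V))).connectedComponentMk ⟨x, hxA⟩ with hd0def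
        set S := componentSet G (Set.univ \ closedNbhd G (↑newX : Set V))
          ((G.induce (Set.univ \ closedNbhd G (↑newX : Set V))).connectedComponentMk ⟨x, hx⟩) with hSdef
        set D := componentSet G (Set.univ \ closedNbhd G (↑X₀ : Set V)) d0 with hDdef
        have hSD : ∀ z ∈ S, z ∈ D := componentSet_subset hsub hx
        have hWD : setWeight w D ≤ (1:ℝ)/2^i := hs₀ d0
        by_cases hd : (1:ℝ)/2^(i+1) < setWeight w D
        · -- heavy case
          obtain ⟨hXdk, hYdsub, hsepd⟩ := hXY d0 hd
          have hWpos : 0 < setWeight w D := lt_trans (by positivity) hd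
          -- image of Xc d0 is inside newX
          have hXcsub : ((Xc d0).image Subtype.val : Set V) ⊆ (↑newX : Set V) := by
            intro v hv
            simp only [hnewX, Finset.coe_union, Set.mem_union]
            right
            rw [Finset.mem_coe, Finset.mem_biUnion]
            exact ⟨d0, Finset.mem_filter.mpr ⟨Finset.mem_univ _, hd⟩, by exact_mod_cast hv⟩
          have hST : ∀ z (hz : z ∈ S), (⟨z, hSD z hz⟩ : ↥D) ∈ Set.univ \ Yc d0 := by
            intro z hz
            refine ⟨trivial, ?_⟩
            intro hzY
            have h1 := hYdsub hzY
            have h2 : z ∈ closedNbhd G (↑((Xc d0).image Subtype.val) : Set V) := by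
              rcases h1 with h1 | ⟨x', hx', hadj⟩
              · left; rw [Finset.coe_image]; exact ⟨⟨z, hSD z hz⟩, h1, rfl⟩
              · right; exact ⟨↑x', by rw [Finset.coe_image]; exact ⟨x', hx', rfl⟩, hadj⟩
            have h3 : z ∈ closedNbhd G (↑newX : Set V) := closedNbhd_mono hXcsub h2
            obtain ⟨hzc, _⟩ := hz
            exact hzc.2 h3
          have hxS : x ∈ S := mem_componentSet hx
          -- S is contained in the image of one component of the inner separator
          set c' := ((G.induce D).induce (Set.univ \ Yc d0)).connectedComponentMk
            ⟨⟨x, hSD x hxS⟩, hST x hxS⟩ with hc'def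
          have hSsub : S ⊆ Subtype.val '' (componentSet (G.induce D) (Set.univ \ Yc d0) c') := by
            intro y hyS
            have hy := hyS
            obtain ⟨hyA, hyc⟩ := hy
            have hreach := SimpleGraph.ConnectedComponent.eq.mp hyc
            obtain ⟨p⟩ := hreach
            have hsupp := walk_support_mem_componentSet hx p
            have hr := nested_reach (G := G) hSD hST p hsupp hyS hxS
            refine ⟨⟨y, hSD y hyS⟩, ⟨hST y hyS, ?_⟩, rfl⟩
            exact SimpleGraph.ConnectedComponent.eq.mpr hr
          -- weight computation
          have hwc := hsepd c'
          have key : setWeight w (Subtype.val '' (componentSet (G.induce D) (Set.univ \ Yc d0) c'))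
              = setWeight w D * setWeight (fun v : ↥D => w ↑v / setWeight w D)
                  (componentSet (G.induce D) (Set.univ \ Yc d0) c') := by
            rw [setWeight_image_val]
            have hrfl : setWeight (fun v : ↥D => w ↑v / setWeight w D)
                (componentSet (G.induce D) (Set.univ \ Yc d0) c')
                = ∑ v ∈ Finset.univ.filter
                    (fun v : ↥D => v ∈ componentSet (G.induce D) (Set.univ \ Yc d0) c'),
                    w ↑v / setWeight w D := rfl
            rw [hrfl, Finset.mul_sum]
            refine Finset.sum_congr rfl fun v _ => ?_
            rw [mul_comm, div_mul_cancel₀ _ (ne_of_gt hWpos)]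
          calc setWeight w S
              ≤ setWeight w (Subtype.val '' (componentSet (G.induce D) (Set.univ \ Yc d0) c')) :=
                setWeight_mono hwnn hSsub
            _ = setWeight w D * setWeight (fun v : ↥D => w ↑v / setWeight w D)
                  (componentSet (G.induce D) (Set.univ \ Yc d0) c') := key
            _ ≤ setWeight w D * (1/2) := by
                apply mul_le_mul_of_nonneg_left hwc (le_of_lt hWpos)
            _ ≤ ((1:ℝ)/2^i) * (1/2) := by
                apply mul_le_mul_of_nonneg_right hWD (by norm_num)
            _ = (1:ℝ)/2^(i+1) := by rw [pow_succ]; ring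
        · -- light case
          push_neg at hd
          calc setWeight w S ≤ setWeight w D := setWeight_mono hwnn hSD
            _ ≤ (1:ℝ)/2^(i+1) := hd


end ArxivFormal
end

section
/- Let t, N > 1 and k be positive integers, and let G be a K_{t,t}-free graph. Let Y₁, …, Y_N be pairwise anticomplete subsets of V(G), each of size at most k, and write S_i = N[Y_i] for each i. Let Z = {v ∈ V(G) : v belongs to at least t of the sets S₁,…,S_N}. Then α(Z) ≤ C(N,t)·t·k^t, where C(N,t) is the binomial coefficient N choose t. -/
open scoped BigOperators
open SimpleGraph

attribute [local instance] Classical.propDecidable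

namespace ArxivFormal

/-- if `G` is `K_{t,t}`-free and `Y₁,…,Y_N` are pairwise anticomplete sets of
size at most `k`, then the set of vertices lying in at least `t` of the closed neighborhoods
`N[Y_i]` has stability number at most `(N choose t)·t·k^t`. -/
theorem stmt_17 :
    ∀ t N k : ℕ, 1 < t → 1 < N → 0 < k →
    ∀ (V : Type) [Fintype V] (G : SimpleGraph V), IndFree G (Ktt t) →
    ∀ Y : Fin N → Finset V, (∀ i, (Y i).card ≤ k) →
      (∀ i j, i ≠ j → Anticomplete G ↑(Y i) ↑(Y j)) →
      alphaOn G {v | t ≤ (Finset.univ.filter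
          (fun i : Fin N => v ∈ closedNbhd G ↑(Y i))).card}
        ≤ N.choose t * t * k ^ t := by
  intro t N k ht hN hk V _ G hfree Y hYcard hanti
  apply csSup_le'
  rintro n ⟨I, hIZ, hIstab, rfl⟩
  by_contra hlt
  push_neg at hlt
  -- choose a t-set of indices for each vertex of I
  have hT : ∀ v ∈ I, ∃ T : Finset (Fin N),
      T ⊆ Finset.univ.filter (fun i : Fin N => v ∈ closedNbhd G ↑(Y i)) ∧ T.card = t := by
    intro v hv
    have hz := hIZ hv
    simp only [Set.mem_setOf_eq] at hz
    obtain ⟨T, hsub, hcard⟩ := Finset.exists_subset_card_eq hz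
    exact ⟨T, hsub, hcard⟩
  choose! T hTsub hTcard using hT
  have hmaps : ∀ v ∈ I, T v ∈ Finset.univ.powersetCard t := by
    intro v hv
    simp [Finset.mem_powersetCard, hTcard v hv]
  obtain ⟨T₀, hT₀mem, hJcard⟩ :=
    Finset.exists_lt_card_fiber_of_mul_lt_card_of_maps_to (n := t * k ^ t) hmaps (by
      rwa [Finset.card_powersetCard, Finset.card_univ, Fintype.card_fin, ← Nat.mul_assoc])
  set J := I.filter (fun v => T v = T₀) with hJdef
  have hT₀card : T₀.card = t := (Finset.mem_powersetCard.mp hT₀mem).2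
  have hJI : J ⊆ I := Finset.filter_subset _ _
  have hJnb : ∀ v ∈ J, ∀ i ∈ T₀, v ∈ closedNbhd G ↑(Y i) := by
    intro v hv i hi
    have hs := hTsub v (hJI hv)
    rw [(Finset.mem_filter.mp hv).2] at hs
    simpa using hs hi
  have hvnotY : ∀ v ∈ J, ∀ i ∈ T₀, v ∉ Y i := by
    intro v hv i hi hvY
    obtain ⟨j, hj, hji⟩ := Finset.exists_mem_ne (by rw [hT₀card]; exact ht) i
    have hnbj := hJnb v hv j hj
    simp only [closedNbhd, Set.mem_union, Set.mem_setOf_eq, Finset.mem_coe] at hnbj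
    rcases hnbj with h | ⟨x, hx, hadj⟩
    · exact Set.disjoint_left.mp (hanti j i hji).1 (Finset.mem_coe.mpr h)
        (Finset.mem_coe.mpr hvY)
    · exact (hanti j i hji).2 x (by simpa using hx) v (Finset.mem_coe.mpr hvY) hadj
  have hnb : ∀ v ∈ J, ∀ i ∈ T₀, ∃ y, y ∈ Y i ∧ G.Adj y v := by
    intro v hv i hi
    have h := hJnb v hv i hi
    simp only [closedNbhd, Set.mem_union, Set.mem_setOf_eq, Finset.mem_coe] at h
    rcases h with h | ⟨x, hx, hadj⟩
    · exact absurd h (hvnotY v hv i hi)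
    · exact ⟨x, by simpa using hx, hadj⟩
  choose! g hgY hgAdj using hnb
  have hmaps2 : ∀ v ∈ J, (fun i (_ : i ∈ T₀) => g v i) ∈ T₀.pi (fun i => Y i) := by
    intro v hv
    rw [Finset.mem_pi]
    intro i hi
    exact hgY v hv i hi
  have hcard2 : (T₀.pi (fun i => Y i)).card * t < J.card := by
    have h1 : (T₀.pi (fun i => Y i)).card ≤ k ^ t := by
      rw [Finset.card_pi]
      calc ∏ i ∈ T₀, (Y i).card ≤ ∏ _i ∈ T₀, k :=
            Finset.prod_le_prod' (fun i _ => hYcard i)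
        _ = k ^ t := by rw [Finset.prod_const, hT₀card]
    calc (T₀.pi (fun i => Y i)).card * t ≤ k ^ t * t := Nat.mul_le_mul_right _ h1
      _ = t * k ^ t := Nat.mul_comm _ _
      _ < J.card := hJcard
  obtain ⟨y₀, hy₀mem, hA2card⟩ :=
    Finset.exists_lt_card_fiber_of_mul_lt_card_of_maps_to hmaps2 hcard2
  obtain ⟨A, hAJ2, hAcard⟩ := Finset.exists_subset_card_eq hA2card.le
  have hAJ : A ⊆ J := hAJ2.trans (Finset.filter_subset _ _)
  have hAg : ∀ v ∈ A, ∀ i (hi : i ∈ T₀), g v i = y₀ i hi := by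
    intro v hv i hi
    have h := (Finset.mem_filter.mp (hAJ2 hv)).2
    exact congrFun (congrFun h i) hi
  have hy₀Y : ∀ i (hi : i ∈ T₀), y₀ i hi ∈ Y i := fun i hi => Finset.mem_pi.mp hy₀mem i hi
  have eA : Fin t ≃ A := (Fintype.equivFinOfCardEq (by rw [Fintype.card_coe, hAcard])).symm
  have eT : Fin t ≃ T₀ := (Fintype.equivFinOfCardEq (by rw [Fintype.card_coe, hT₀card])).symm
  set a : Fin t → V := fun j => (eA j : V) with hadef
  set b : Fin t → V := fun j => y₀ (eT j) (eT j).2 with hbdef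
  have haA : ∀ j, a j ∈ A := fun j => (eA j).2
  have hbY : ∀ j, b j ∈ Y (eT j) := fun j => hy₀Y (eT j) (eT j).2
  have hadjab : ∀ j j', G.Adj (b j') (a j) := by
    intro j j'
    have h1 := hgAdj (a j) (hAJ (haA j)) (eT j') (eT j').2
    rwa [hAg (a j) (haA j) (eT j') (eT j').2] at h1
  have hainj : Function.Injective a := by
    intro x y hxy
    have : eA x = eA y := Subtype.ext hxy
    exact eA.injective this
  have hbinj : Function.Injective b := by
    intro x y hxy
    by_cases h : (eT x : Fin N) = (eT y : Fin N)
    · exact eT.injective (Subtype.ext h)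
    · have h1 : b y ∈ (↑(Y (eT x)) : Set V) := by
        rw [← hxy]; exact Finset.mem_coe.mpr (hbY x)
      exact absurd (Finset.mem_coe.mpr (hbY y))
        (Set.disjoint_left.mp (hanti (eT x) (eT y) h).1 h1)
  have hab : ∀ j j', a j ≠ b j' := by
    intro j j' h
    exact hvnotY (a j) (hAJ (haA j)) (eT j') (eT j').2 (h ▸ hbY j')
  have hanotadj : ∀ j j', ¬ G.Adj (a j) (a j') :=
    fun j j' => hIstab (a j) (hJI (hAJ (haA j))) (a j') (hJI (hAJ (haA j')))
  have hbnotadj : ∀ j j', ¬ G.Adj (b j) (b j') := by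
    intro j j' hadj
    by_cases h : (eT j : Fin N) = (eT j' : Fin N)
    · have : j = j' := eT.injective (Subtype.ext h)
      subst this
      exact G.irrefl hadj
    · exact (hanti (eT j) (eT j') h).2 (b j) (Finset.mem_coe.mpr (hbY j))
        (b j') (Finset.mem_coe.mpr (hbY j')) hadj
  let f : Fin t ⊕ Fin t → V := Sum.elim a b
  have hinj : Function.Injective f := by
    rintro (x | x) (y | y) hxy <;>
      simp only [f, Sum.elim_inl, Sum.elim_inr] at hxy
    · exact congrArg Sum.inl (hainj hxy)
    · exact absurd hxy (hab x y)
    · exact absurd hxy.symm (hab y x)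
    · exact congrArg Sum.inr (hbinj hxy)
  have hrel : ∀ x y, G.Adj (f x) (f y) ↔ (Ktt t).Adj x y := by
    rintro (x | x) (y | y) <;>
      simp only [f, Sum.elim_inl, Sum.elim_inr, Ktt, completeBipartiteGraph_adj,
        Sum.isLeft_inl, Sum.isRight_inl, Sum.isLeft_inr, Sum.isRight_inr]
    · simp [hanotadj x y]
    · simp [(hadjab x y).symm]
    · simp [hadjab y x]
    · simp [hbnotadj x y]
  exact hfree.false ⟨⟨f, hinj⟩, fun {x y} => hrel x y⟩


end ArxivFormal
end
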